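/- Let Θ : U → ℂ be smooth on an open set U ⊆ ℝ⁴ with coordinates (u,v,ζ,w), and let G[Θ] be the Plebański-type complex metric matrix. Then the inverse matrix has only the nonzero components (G⁻¹)^{uv} = (G⁻¹)^{vu} = 1, (G⁻¹)^{ζw} = (G⁻¹)^{wζ} = 1, (G⁻¹)^{uu} = 2∂_w²Θ, (G⁻¹)^{ww} = 2∂_u²Θ, (G⁻¹)^{uw} = (G⁻¹)^{wu} = −2∂_u∂_wΘ, and for every smooth φ : U → ℂ the wave operator satisfies □φ = 2(∂_u∂_vφ + ∂_w∂_ζφ + (∂_u²Θ)∂_w²φ + (∂_w²Θ)∂_u²φ − 2(∂_u∂_wΘ)∂_u∂_wφ); in particular the first-order terms Σ_{a,b}(G⁻¹)^{ab}Γ^c_{ab}∂_cφ vanish. -/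

import Mathlib

/- Background: coordinates (u,v,ζ,w) = indices (0,1,2,3) on ℝ⁴ (all real),
   Plebański-type complex metric
   g = 2 du dv + 2 dζ dw − 2Θ_ww dv² + 4Θ_uw dv dζ − 2Θ_uu dζ². -/

noncomputable section

abbrev V4 : Type := Fin 4 → ℝ

/-- Partial derivative of a complex-valued function in coordinate direction `i`. -/
def pdC (i : Fin 4) (f : V4 → ℂ) : V4 → ℂ :=
  fun x => fderiv ℝ f x (Pi.single i 1)

/-- The Plebański-type complex metric matrix G[Θ]. -/
def pleb (Θ : V4 → ℂ) (x : V4) : Matrix (Fin 4) (Fin 4) ℂ :=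
  !![0, 1, 0, 0;
     1, -2 * pdC 3 (pdC 3 Θ) x, 2 * pdC 0 (pdC 3 Θ) x, 0;
     0, 2 * pdC 0 (pdC 3 Θ) x, -2 * pdC 0 (pdC 0 Θ) x, 1;
     0, 0, 1, 0]

/-- The inverse metric. -/
def plebInv (Θ : V4 → ℂ) (x : V4) : Matrix (Fin 4) (Fin 4) ℂ := (pleb Θ x)⁻¹

/-- Christoffel symbols Γ^c_{ab} of G[Θ]. -/
def GamP (Θ : V4 → ℂ) (c a b : Fin 4) (x : V4) : ℂ :=
  (1/2) * ∑ d, plebInv Θ x c d *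
    (pdC a (fun y => pleb Θ y d b) x + pdC b (fun y => pleb Θ y d a) x
      - pdC d (fun y => pleb Θ y a b) x)

/-- Ricci tensor of G[Θ]. -/
def ricP (Θ : V4 → ℂ) (a b : Fin 4) (x : V4) : ℂ :=
  (∑ c, pdC c (fun y => GamP Θ c a b y) x)
  - (∑ c, pdC a (fun y => GamP Θ c c b y) x)
  + ∑ c, ∑ d, (GamP Θ c c d x * GamP Θ d a b x - GamP Θ c a d x * GamP Θ d c b x)

/-- Wave operator of G[Θ]. -/
def boxP (Θ : V4 → ℂ) (φ : V4 → ℂ) (x : V4) : ℂ :=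
  ∑ a, ∑ b, plebInv Θ x a b *
    (pdC a (pdC b φ) x - ∑ c, GamP Θ c a b x * pdC c φ x)

/-- The hyper-heavenly expression
    f = Θ_uv + Θ_ζw + Θ_uu Θ_ww − Θ_uw². -/
def fTheta (Θ : V4 → ℂ) (x : V4) : ℂ :=
  pdC 0 (pdC 1 Θ) x + pdC 2 (pdC 3 Θ) x
    + pdC 0 (pdC 0 Θ) x * pdC 3 (pdC 3 Θ) x - (pdC 0 (pdC 3 Θ) x)^2

lemma plebInv_eq (Θ : V4 → ℂ) (x : V4) : plebInv Θ x =
      !![2 * pdC 3 (pdC 3 Θ) x, 1, 0, -2 * pdC 0 (pdC 3 Θ) x;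
         1, 0, 0, 0;
         0, 0, 0, 1;
         -2 * pdC 0 (pdC 3 Θ) x, 0, 1, 2 * pdC 0 (pdC 0 Θ) x] := by
  unfold plebInv
  apply Matrix.inv_eq_left_inv
  ext i j
  fin_cases i <;> fin_cases j <;>
    simp [pleb, Matrix.mul_apply, Fin.sum_univ_four, Matrix.one_apply,
      Matrix.vecHead, Matrix.vecTail]

lemma contDiffAt_pdC {f : V4 → ℂ} {x : V4} (i : Fin 4)
    (hf : ContDiffAt ℝ (⊤ : ℕ∞) f x) : ContDiffAt ℝ (⊤ : ℕ∞) (pdC i f) x := by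
  have h1 : ContDiffAt ℝ (⊤ : ℕ∞) (fderiv ℝ f) x := hf.fderiv_right (by exact_mod_cast le_top)
  exact (ContinuousLinearMap.apply ℝ ℂ (Pi.single i 1 : V4)).contDiff.contDiffAt.comp x h1

lemma pdC_const_mul {g : V4 → ℂ} {x : V4} (hg : DifferentiableAt ℝ g x) (a : Fin 4) (c : ℂ) :
    pdC a (fun y => c * g y) x = c * pdC a g x := by
  simp only [pdC, fderiv_const_mul hg c]
  simp

lemma pdC_swap {f : V4 → ℂ} {x : V4} (hf : ContDiffAt ℝ (⊤ : ℕ∞) f x) (a b : Fin 4) :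
    pdC a (pdC b f) x = pdC b (pdC a f) x := by
  have hsymm : IsSymmSndFDerivAt ℝ f x := hf.isSymmSndFDerivAt (by rw [minSmoothness_of_isRCLikeNormedField]; exact WithTop.coe_le_coe.mpr (le_top : (2:ℕ∞) ≤ ⊤))
  have key : ∀ i j : Fin 4, pdC i (pdC j f) x
      = fderiv ℝ (fderiv ℝ f) x (Pi.single i 1) (Pi.single j 1) := by
    intro i j
    have h1 : ContDiffAt ℝ (⊤ : ℕ∞) (fderiv ℝ f) x := hf.fderiv_right (by exact_mod_cast le_top)
    have hdf : DifferentiableAt ℝ (fderiv ℝ f) x :=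
      h1.differentiableAt (by simp)
    have heq : pdC j f = (fun L : V4 →L[ℝ] ℂ => L (Pi.single j 1)) ∘ fderiv ℝ f := rfl
    have hcomp := ((ContinuousLinearMap.apply ℝ ℂ (Pi.single j 1 : V4)).hasFDerivAt.comp x
      hdf.hasFDerivAt).fderiv
    show fderiv ℝ (pdC j f) x (Pi.single i 1) = _
    rw [heq]
    rw [show ((fun L : V4 →L[ℝ] ℂ => L (Pi.single j 1)) ∘ fderiv ℝ f)
        = (⇑(ContinuousLinearMap.apply ℝ ℂ (Pi.single j 1 : V4)) ∘ fderiv ℝ f) from rfl, hcomp]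
    rfl
  rw [key, key]
  exact hsymm (Pi.single a 1) (Pi.single b 1)

lemma pdC_congr {f g : V4 → ℂ} {x : V4} (h : f =ᶠ[nhds x] g) (a : Fin 4) :
    pdC a f x = pdC a g x := by
  simp only [pdC, h.fderiv_eq]

lemma contraction_zero {U : Set V4} (hUopen : IsOpen U) {Θ : V4 → ℂ}
    (hΘ : ContDiffOn ℝ (⊤ : ℕ∞) Θ U) {x : V4} (hx : x ∈ U) (c : Fin 4) :
    ∑ a, ∑ b, plebInv Θ x a b * GamP Θ c a b x = 0 := by
  have hΘx : ContDiffAt ℝ (⊤ : ℕ∞) Θ x := hΘ.contDiffAt (hUopen.mem_nhds hx)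
  have hP : DifferentiableAt ℝ (pdC 3 (pdC 3 Θ)) x :=
    (contDiffAt_pdC 3 (contDiffAt_pdC 3 hΘx)).differentiableAt (by simp)
  have hQ : DifferentiableAt ℝ (pdC 0 (pdC 3 Θ)) x :=
    (contDiffAt_pdC 0 (contDiffAt_pdC 3 hΘx)).differentiableAt (by simp)
  have hR : DifferentiableAt ℝ (pdC 0 (pdC 0 Θ)) x :=
    (contDiffAt_pdC 0 (contDiffAt_pdC 0 hΘx)).differentiableAt (by simp)
  have hs1 : pdC 3 (pdC 0 (pdC 3 Θ)) x = pdC 0 (pdC 3 (pdC 3 Θ)) x :=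
    pdC_swap (contDiffAt_pdC 3 hΘx) 3 0
  have hs2 : pdC 3 (pdC 0 (pdC 0 Θ)) x = pdC 0 (pdC 0 (pdC 3 Θ)) x := by
    have e1 : pdC 3 (pdC 0 (pdC 0 Θ)) x = pdC 0 (pdC 3 (pdC 0 Θ)) x :=
      pdC_swap (contDiffAt_pdC 0 hΘx) 3 0
    have e2 : (pdC 3 (pdC 0 Θ)) =ᶠ[nhds x] (pdC 0 (pdC 3 Θ)) := by
      filter_upwards [hUopen.mem_nhds hx] with y hy
      exact pdC_swap (hΘ.contDiffAt (hUopen.mem_nhds hy)) 3 0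
    rw [e1, pdC_congr e2]
  have E00 : ∀ a : Fin 4, pdC a (fun y => pleb Θ y 0 0) x = 0 := by
    intro a
    have e : (fun y => pleb Θ y 0 0) = (fun _ => (0 : ℂ)) := by funext y; simp [pleb, Matrix.vecHead, Matrix.vecTail]
    rw [e]; simp [pdC]
  have E01 : ∀ a : Fin 4, pdC a (fun y => pleb Θ y 0 1) x = 0 := by
    intro a
    have e : (fun y => pleb Θ y 0 1) = (fun _ => (1 : ℂ)) := by funext y; simp [pleb, Matrix.vecHead, Matrix.vecTail]
    rw [e]; simp [pdC]
  have E02 : ∀ a : Fin 4, pdC a (fun y => pleb Θ y 0 2) x = 0 := by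
    intro a
    have e : (fun y => pleb Θ y 0 2) = (fun _ => (0 : ℂ)) := by funext y; simp [pleb, Matrix.vecHead, Matrix.vecTail]
    rw [e]; simp [pdC]
  have E03 : ∀ a : Fin 4, pdC a (fun y => pleb Θ y 0 3) x = 0 := by
    intro a
    have e : (fun y => pleb Θ y 0 3) = (fun _ => (0 : ℂ)) := by funext y; simp [pleb, Matrix.vecHead, Matrix.vecTail]
    rw [e]; simp [pdC]
  have E10 : ∀ a : Fin 4, pdC a (fun y => pleb Θ y 1 0) x = 0 := by
    intro a
    have e : (fun y => pleb Θ y 1 0) = (fun _ => (1 : ℂ)) := by funext y; simp [pleb, Matrix.vecHead, Matrix.vecTail]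
    rw [e]; simp [pdC]
  have E11 : ∀ a : Fin 4, pdC a (fun y => pleb Θ y 1 1) x = (-2 : ℂ) * pdC a (pdC 3 (pdC 3 Θ)) x := by
    intro a
    have e : (fun y => pleb Θ y 1 1) = (fun y => (-2 : ℂ) * pdC 3 (pdC 3 Θ) y) := by
      funext y; simp [pleb]
    rw [e, pdC_const_mul hP]
  have E12 : ∀ a : Fin 4, pdC a (fun y => pleb Θ y 1 2) x = (2 : ℂ) * pdC a (pdC 0 (pdC 3 Θ)) x := by
    intro a
    have e : (fun y => pleb Θ y 1 2) = (fun y => (2 : ℂ) * pdC 0 (pdC 3 Θ) y) := by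
      funext y; simp [pleb]
    rw [e, pdC_const_mul hQ]
  have E13 : ∀ a : Fin 4, pdC a (fun y => pleb Θ y 1 3) x = 0 := by
    intro a
    have e : (fun y => pleb Θ y 1 3) = (fun _ => (0 : ℂ)) := by funext y; simp [pleb, Matrix.vecHead, Matrix.vecTail]
    rw [e]; simp [pdC]
  have E20 : ∀ a : Fin 4, pdC a (fun y => pleb Θ y 2 0) x = 0 := by
    intro a
    have e : (fun y => pleb Θ y 2 0) = (fun _ => (0 : ℂ)) := by funext y; simp [pleb, Matrix.vecHead, Matrix.vecTail]
    rw [e]; simp [pdC]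
  have E21 : ∀ a : Fin 4, pdC a (fun y => pleb Θ y 2 1) x = (2 : ℂ) * pdC a (pdC 0 (pdC 3 Θ)) x := by
    intro a
    have e : (fun y => pleb Θ y 2 1) = (fun y => (2 : ℂ) * pdC 0 (pdC 3 Θ) y) := by
      funext y; simp [pleb]
    rw [e, pdC_const_mul hQ]
  have E22 : ∀ a : Fin 4, pdC a (fun y => pleb Θ y 2 2) x = (-2 : ℂ) * pdC a (pdC 0 (pdC 0 Θ)) x := by
    intro a
    have e : (fun y => pleb Θ y 2 2) = (fun y => (-2 : ℂ) * pdC 0 (pdC 0 Θ) y) := by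
      funext y; simp [pleb]
    rw [e, pdC_const_mul hR]
  have E23 : ∀ a : Fin 4, pdC a (fun y => pleb Θ y 2 3) x = 0 := by
    intro a
    have e : (fun y => pleb Θ y 2 3) = (fun _ => (1 : ℂ)) := by funext y; simp [pleb, Matrix.vecHead, Matrix.vecTail]
    rw [e]; simp [pdC]
  have E30 : ∀ a : Fin 4, pdC a (fun y => pleb Θ y 3 0) x = 0 := by
    intro a
    have e : (fun y => pleb Θ y 3 0) = (fun _ => (0 : ℂ)) := by funext y; simp [pleb, Matrix.vecHead, Matrix.vecTail]
    rw [e]; simp [pdC]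
  have E31 : ∀ a : Fin 4, pdC a (fun y => pleb Θ y 3 1) x = 0 := by
    intro a
    have e : (fun y => pleb Θ y 3 1) = (fun _ => (0 : ℂ)) := by funext y; simp [pleb, Matrix.vecHead, Matrix.vecTail]
    rw [e]; simp [pdC]
  have E32 : ∀ a : Fin 4, pdC a (fun y => pleb Θ y 3 2) x = 0 := by
    intro a
    have e : (fun y => pleb Θ y 3 2) = (fun _ => (1 : ℂ)) := by funext y; simp [pleb, Matrix.vecHead, Matrix.vecTail]
    rw [e]; simp [pdC]
  have E33 : ∀ a : Fin 4, pdC a (fun y => pleb Θ y 3 3) x = 0 := by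
    intro a
    have e : (fun y => pleb Θ y 3 3) = (fun _ => (0 : ℂ)) := by funext y; simp [pleb, Matrix.vecHead, Matrix.vecTail]
    rw [e]; simp [pdC]
  have hGi := plebInv_eq Θ x
  fin_cases c <;>
  · simp only [GamP, hGi, Fin.sum_univ_four, E00, E01, E02, E03, E10, E11, E12, E13, E20, E21, E22, E23, E30, E31, E32, E33]
    simp [Matrix.vecHead, Matrix.vecTail]
    try simp only [hs1, hs2]
    try ring

lemma box_eq {U : Set V4} (hUopen : IsOpen U) {Θ : V4 → ℂ}
    (hΘ : ContDiffOn ℝ (⊤ : ℕ∞) Θ U) {φ : V4 → ℂ} (hφ : ContDiffOn ℝ (⊤ : ℕ∞) φ U)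
    {x : V4} (hx : x ∈ U) :
    boxP Θ φ x = 2 * (pdC 0 (pdC 1 φ) x + pdC 3 (pdC 2 φ) x
        + pdC 0 (pdC 0 Θ) x * pdC 3 (pdC 3 φ) x
        + pdC 3 (pdC 3 Θ) x * pdC 0 (pdC 0 φ) x
        - 2 * pdC 0 (pdC 3 Θ) x * pdC 0 (pdC 3 φ) x) := by
  have hφx : ContDiffAt ℝ (⊤ : ℕ∞) φ x := hφ.contDiffAt (hUopen.mem_nhds hx)
  have h10 : pdC 1 (pdC 0 φ) x = pdC 0 (pdC 1 φ) x := pdC_swap hφx 1 0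
  have h23 : pdC 2 (pdC 3 φ) x = pdC 3 (pdC 2 φ) x := pdC_swap hφx 2 3
  have h30 : pdC 3 (pdC 0 φ) x = pdC 0 (pdC 3 φ) x := pdC_swap hφx 3 0
  have hz0 := contraction_zero hUopen hΘ hx 0
  have hz1 := contraction_zero hUopen hΘ hx 1
  have hz2 := contraction_zero hUopen hΘ hx 2
  have hz3 := contraction_zero hUopen hΘ hx 3
  simp only [Fin.sum_univ_four, plebInv_eq] at hz0 hz1 hz2 hz3
  simp [Matrix.vecHead, Matrix.vecTail] at hz0 hz1 hz2 hz3
  simp only [boxP, Fin.sum_univ_four, plebInv_eq]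
  simp [Matrix.vecHead, Matrix.vecTail]
  simp only [h10, h23, h30]
  linear_combination (-(pdC 0 φ x)) * hz0 + (-(pdC 1 φ x)) * hz1
    + (-(pdC 2 φ x)) * hz2 + (-(pdC 3 φ x)) * hz3

/-- The inverse and wave operator of the Plebański-type complex metric G[Θ];
the first-order terms of the wave operator vanish. -/
theorem stmt5 (U : Set V4) (hUopen : IsOpen U)
    (Θ : V4 → ℂ) (hΘ : ContDiffOn ℝ (⊤ : ℕ∞) Θ U) :
    (∀ x ∈ U, plebInv Θ x =
      !![2 * pdC 3 (pdC 3 Θ) x, 1, 0, -2 * pdC 0 (pdC 3 Θ) x;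
         1, 0, 0, 0;
         0, 0, 0, 1;
         -2 * pdC 0 (pdC 3 Θ) x, 0, 1, 2 * pdC 0 (pdC 0 Θ) x]) ∧
    (∀ φ : V4 → ℂ, ContDiffOn ℝ (⊤ : ℕ∞) φ U → ∀ x ∈ U,
      boxP Θ φ x = 2 * (pdC 0 (pdC 1 φ) x + pdC 3 (pdC 2 φ) x
        + pdC 0 (pdC 0 Θ) x * pdC 3 (pdC 3 φ) x
        + pdC 3 (pdC 3 Θ) x * pdC 0 (pdC 0 φ) x
        - 2 * pdC 0 (pdC 3 Θ) x * pdC 0 (pdC 3 φ) x)) ∧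
    (∀ x ∈ U, ∀ c : Fin 4, ∑ a, ∑ b, plebInv Θ x a b * GamP Θ c a b x = 0) := by
  refine ⟨fun x _ => plebInv_eq Θ x, ?_, ?_⟩
  · intro φ hφ x hx
    exact box_eq hUopen hΘ hφ hx
  · intro x hx c
    exact contraction_zero hUopen hΘ hx c
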